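/- Theorem 4.2 (holomorphic functions on G invariant under the cyclic hyperbolic group): Fix a real number c > 1. Let F : ℂ × ℂ → ℂ define a holomorphic function on G. Then F(c·z, c·w) = F(z, w) holds for all z, w ∈ ℂ with z ≠ w if and only if there exists an entire function g : ℂ → ℂ such that F(z, w) = g(w/(z − w)) for all z, w ∈ ℂ with z ≠ w. -/

import Mathlib

/-- `F : ℂ × ℂ → ℂ` defines a holomorphic function on
`G = Ĉ² \ diagonal`, expressed in the standard affine charts. -/
def DefinesHolomorphicOnG (F : ℂ × ℂ → ℂ) : Prop :=
  DifferentiableOn ℂ F {p : ℂ × ℂ | p.1 ≠ p.2} ∧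
  (∃ F₂ : ℂ × ℂ → ℂ, DifferentiableOn ℂ F₂ {p : ℂ × ℂ | p.1 * p.2 ≠ 1} ∧
    ∀ z v : ℂ, v ≠ 0 → z * v ≠ 1 → F₂ (z, v) = F (z, 1 / v)) ∧
  (∃ F₃ : ℂ × ℂ → ℂ, DifferentiableOn ℂ F₃ {p : ℂ × ℂ | p.1 * p.2 ≠ 1} ∧
    ∀ u w : ℂ, u ≠ 0 → u * w ≠ 1 → F₃ (u, w) = F (1 / u, w))

/-- Theorem 4.2: a holomorphic function on `G` is invariant under
`(z,w) ↦ (cz, cw)` (with `c > 1` real) iff it has the form `g (w / (z - w))`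
for some entire function `g`. -/
theorem invariant_hyperbolic_iff (c : ℝ) (hc : 1 < c)
    (F : ℂ × ℂ → ℂ) (hF : DefinesHolomorphicOnG F) :
    (∀ z w : ℂ, z ≠ w → F ((c : ℂ) * z, (c : ℂ) * w) = F (z, w)) ↔
    (∃ g : ℂ → ℂ, Differentiable ℂ g ∧
      ∀ z w : ℂ, z ≠ w → F (z, w) = g (w / (z - w))) := by
  obtain ⟨hd, -, -⟩ := hF
  have hcpos : (0:ℝ) < c := lt_trans one_pos hc
  have hc0 : (c:ℂ) ≠ 0 := by exact_mod_cast ne_of_gt hcpos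
  have hopen : IsOpen {p : ℂ × ℂ | p.1 ≠ p.2} :=
    (isClosed_eq continuous_fst continuous_snd).isOpen_compl
  constructor
  · intro hinv
    -- Key: scaling invariance for all nonzero complex λ.
    have key : ∀ z w : ℂ, z ≠ w → ∀ l : ℂ, l ≠ 0 → F (l * z, l * w) = F (z, w) := by
      intro z w hzw l hl
      set h : ℂ → ℂ := fun t => F (t * z, t * w) with hhdef
      have hmem : ∀ t : ℂ, t ≠ 0 → (t * z, t * w) ∈ {p : ℂ × ℂ | p.1 ≠ p.2} := by
        intro t ht
        exact fun e => hzw (mul_left_cancel₀ ht e)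
      have hdiff : ∀ t : ℂ, t ≠ 0 → DifferentiableAt ℂ h t := by
        intro t ht
        have h1 : DifferentiableAt ℂ F (t * z, t * w) :=
          hd.differentiableAt (hopen.mem_nhds (hmem t ht))
        exact h1.comp t (by fun_prop)
      have hper : ∀ t : ℂ, t ≠ 0 → h ((c:ℂ) * t) = h t := by
        intro t ht
        have := hinv (t * z) (t * w) (hmem t ht)
        simpa [hhdef, mul_assoc] using this
      have hzpow : ∀ (n : ℤ) (t : ℂ), t ≠ 0 → h ((c:ℂ) ^ n * t) = h t := by
        intro n
        induction n using Int.induction_on with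
        | zero => intro t ht; simp
        | succ n ih =>
          intro t ht
          have e : (c:ℂ) ^ ((n:ℤ) + 1) * t = (c:ℂ) * ((c:ℂ) ^ (n:ℤ) * t) := by
            rw [zpow_add_one₀ hc0]; ring
          rw [e, hper _ (mul_ne_zero (zpow_ne_zero _ hc0) ht), ih t ht]
        | pred n ih =>
          intro t ht
          have e : (c:ℂ) ^ (-(n:ℤ)) * t = (c:ℂ) * ((c:ℂ) ^ (-(n:ℤ) - 1) * t) := by
            rw [show (-(n:ℤ) : ℤ) = (-(n:ℤ) - 1) + 1 by ring_nf, zpow_add_one₀ hc0]; ring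
          have := hper ((c:ℂ) ^ (-(n:ℤ) - 1) * t) (mul_ne_zero (zpow_ne_zero _ hc0) ht)
          rw [← e] at this
          rw [← this, ih t ht]
      -- Compact fundamental annulus
      set A : Set ℂ := Metric.closedBall 0 c \ Metric.ball 0 1 with hAdef
      have hA : IsCompact A := (isCompact_closedBall 0 c).diff Metric.isOpen_ball
      have hAne : ∀ t ∈ A, t ≠ 0 := by
        intro t ht h0
        apply ht.2
        simp [h0]
      have hcont : ContinuousOn h A := fun t ht =>
        (hdiff t (hAne t ht)).continuousAt.continuousWithinAt
      have hK : IsCompact (h '' A) := hA.image_of_continuousOn hcont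
      have hmemK : ∀ t : ℂ, t ≠ 0 → h t ∈ h '' A := by
        intro t ht
        obtain ⟨n, hn1, hn2⟩ := exists_mem_Ico_zpow (norm_pos_iff.2 ht) hc
        set μ : ℂ := ((c:ℂ) ^ n)⁻¹ * t with hμdef
        have hnorm : ‖μ‖ = (c ^ n)⁻¹ * ‖t‖ := by
          rw [hμdef, norm_mul, norm_inv, norm_zpow, Complex.norm_real,
            Real.norm_eq_abs, abs_of_pos hcpos]
        have hμ0 : μ ≠ 0 := mul_ne_zero (inv_ne_zero (zpow_ne_zero _ hc0)) ht
        have hμA : μ ∈ A := by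
          constructor
          · rw [Metric.mem_closedBall, dist_zero_right, hnorm]
            rw [inv_mul_le_iff₀ (zpow_pos hcpos n)]
            calc ‖t‖ ≤ c ^ (n + 1) := le_of_lt hn2
              _ = c ^ n * c := by rw [zpow_add_one₀ (ne_of_gt hcpos)]
          · rw [Metric.mem_ball, dist_zero_right, hnorm]
            rw [not_lt, le_inv_mul_iff₀ (zpow_pos hcpos n), mul_one]
            exact hn1
        have : h t = h μ := by
          have := hzpow n μ hμ0
          rwa [hμdef, ← mul_assoc, mul_inv_cancel₀ (zpow_ne_zero _ hc0), one_mul] at this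
        rw [this]
        exact Set.mem_image_of_mem h hμA
      -- Boundedness
      obtain ⟨C, hC⟩ := hK.isBounded.exists_norm_le
      have hbdd : BddAbove (norm ∘ h '' (Set.univ \ {(0:ℂ)})) := by
        refine ⟨C, ?_⟩
        rintro x ⟨t, ⟨-, ht⟩, rfl⟩
        exact hC _ (hmemK t ht)
      -- Removable singularity at 0
      set H : ℂ → ℂ := Function.update h 0 (Filter.limUnder (nhdsWithin 0 {(0:ℂ)}ᶜ) h) with hHdef
      have hHd : Differentiable ℂ H := by
        rw [← differentiableOn_univ]
        exact Complex.differentiableOn_update_limUnder_of_bddAbove Filter.univ_mem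
          (fun t ht => (hdiff t (by simpa using ht.2)).differentiableWithinAt) hbdd
      have hHK : ∀ t : ℂ, H t ∈ h '' A := by
        intro t
        rcases eq_or_ne t 0 with rfl | ht
        · refine hK.isClosed.mem_of_tendsto
            ((hHd.continuous.continuousAt.tendsto).mono_left
              (nhdsWithin_le_nhds : nhdsWithin (0:ℂ) {(0:ℂ)}ᶜ ≤ nhds 0)) ?_
          filter_upwards [self_mem_nhdsWithin] with x hx
          rw [hHdef, Function.update_of_ne hx]
          exact hmemK x hx
        · rw [hHdef, Function.update_of_ne ht]
          exact hmemK t ht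
      have hbound : Bornology.IsBounded (Set.range H) :=
        hK.isBounded.subset (Set.range_subset_iff.2 hHK)
      have := hHd.apply_eq_apply_of_bounded hbound l 1
      rw [hHdef, Function.update_of_ne hl, Function.update_of_ne one_ne_zero] at this
      simpa [hhdef] using this
    refine ⟨fun t => F (1 + t, t), ?_, ?_⟩
    · intro t
      have hm : ((1:ℂ) + t, t) ∈ {p : ℂ × ℂ | p.1 ≠ p.2} := by
        simp only [Set.mem_setOf_eq, ne_eq, add_eq_right]
        exact one_ne_zero
      have hinner : DifferentiableAt ℂ (fun t : ℂ => ((1:ℂ) + t, t)) t := by fun_prop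
      have hcomp : DifferentiableAt ℂ (F ∘ fun t : ℂ => ((1:ℂ) + t, t)) t :=
        DifferentiableAt.comp t (hd.differentiableAt (hopen.mem_nhds hm)) hinner
      exact hcomp
    · intro z w hzw
      have hzw0 : z - w ≠ 0 := sub_ne_zero.2 hzw
      have h1 : (1:ℂ) + w / (z - w) ≠ w / (z - w) := by
        rw [ne_eq, add_eq_right]
        exact one_ne_zero
      have := key (1 + w / (z - w)) (w / (z - w)) h1 (z - w) hzw0
      rw [show (z - w) * (1 + w / (z - w)) = z by field_simp; ring,
        show (z - w) * (w / (z - w)) = w by field_simp] at this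
      exact this
  · rintro ⟨g, -, hg⟩ z w hzw
    have hzw' : (c:ℂ) * z ≠ (c:ℂ) * w := fun e => hzw (mul_left_cancel₀ hc0 e)
    rw [hg _ _ hzw', hg _ _ hzw]
    congr 1
    rw [show (c:ℂ) * z - (c:ℂ) * w = (c:ℂ) * (z - w) by ring,
      mul_div_mul_left _ _ hc0]
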